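/- For both OneMinMax and LOTZ, the crowding distance contribution CDC(·, P) is diversity-favouring on {0,1}ⁿ \ {0ⁿ, 1ⁿ}: for every population P of mutually non-dominated points and all Pareto-optimal x, y ∈ P with x, y ∉ {0ⁿ, 1ⁿ}, if x is bad and y is good then CDC(x, P) < CDC(y, P). -/

import Mathlib

noncomputable section
open scoped ENNReal
attribute [local instance] Classical.propDecidable

namespace EMO


/-- A bit string of length `n`. -/
abbrev BitString (n : ℕ) := Fin n → Bool

/-- Number of one-bits. -/
def onesCount {n : ℕ} (x : BitString n) : ℕ :=
  (Finset.univ.filter fun i => x i = true).card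

def allOnes (n : ℕ) : BitString n := fun _ => true
def allZeros (n : ℕ) : BitString n := fun _ => false

/-- The bi-objective function OneMinMax. -/
def OneMinMax {n : ℕ} (x : BitString n) : ℤ × ℤ :=
  ((onesCount x : ℤ), (n : ℤ) - (onesCount x : ℤ))

/-- Number of leading ones. -/
def leadingOnes {n : ℕ} (x : BitString n) : ℕ :=
  (Finset.univ.filter fun i : Fin n => ∀ j : Fin n, j ≤ i → x j = true).card

/-- Number of trailing zeros. -/
def trailingZeros {n : ℕ} (x : BitString n) : ℕ :=
  (Finset.univ.filter fun i : Fin n => ∀ j : Fin n, i ≤ j → x j = false).card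

/-- The bi-objective function LOTZ. -/
def LOTZ {n : ℕ} (x : BitString n) : ℤ × ℤ :=
  ((leadingOnes x : ℤ), (trailingZeros x : ℤ))

/-- `y` dominates `x` (maximisation). -/
def dominates {n : ℕ} (f : BitString n → ℤ × ℤ) (y x : BitString n) : Prop :=
  (f x).1 ≤ (f y).1 ∧ (f x).2 ≤ (f y).2 ∧ f x ≠ f y

/-- `y` weakly dominates `x` (maximisation). -/
def weaklyDominates {n : ℕ} (f : BitString n → ℤ × ℤ) (y x : BitString n) : Prop :=
  (f x).1 ≤ (f y).1 ∧ (f x).2 ≤ (f y).2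

/-- Pareto optimality. -/
def paretoOptimal {n : ℕ} (f : BitString n → ℤ × ℤ) (x : BitString n) : Prop :=
  ¬ ∃ y : BitString n, dominates f y x

/-- A population of mutually non-dominated points. -/
def mutuallyNonDominated {n : ℕ} (f : BitString n → ℤ × ℤ)
    (P : Finset (BitString n)) : Prop :=
  ∀ x ∈ P, ∀ y ∈ P, ¬ dominates f y x

/-- Flip bit `i` of `x`. -/
def flipBit {n : ℕ} (x : BitString n) (i : Fin n) : BitString n :=
  Function.update x i (!x i)

/-- `y` is a Hamming neighbour of `x`. -/
def hammingNeighbour {n : ℕ} (x y : BitString n) : Prop :=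
  ∃ i : Fin n, y = flipBit x i

/-- `x` is good relative to population `P`: it is Pareto optimal and has a Pareto-optimal
Hamming neighbour whose objective vector is not attained by any member of `P`. -/
def isGood {n : ℕ} (f : BitString n → ℤ × ℤ) (P : Finset (BitString n))
    (x : BitString n) : Prop :=
  paretoOptimal f x ∧
    ∃ y : BitString n, hammingNeighbour x y ∧ paretoOptimal f y ∧ ∀ z ∈ P, f z ≠ f y

/-- `x` is bad relative to population `P`. -/
def isBad {n : ℕ} (f : BitString n → ℤ × ℤ) (P : Finset (BitString n))
    (x : BitString n) : Prop :=
  paretoOptimal f x ∧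
    ¬ ∃ y : BitString n, hammingNeighbour x y ∧ paretoOptimal f y ∧ ∀ z ∈ P, f z ≠ f y

/-- `P` covers the whole Pareto front of `f`. -/
def coversFront {n : ℕ} (f : BitString n → ℤ × ℤ) (P : Finset (BitString n)) : Prop :=
  ∀ x : BitString n, paretoOptimal f x → ∃ z ∈ P, f z = f x

/-- The hypervolume contribution of `x` to `P` (for a population of mutually
non-dominated points, with reference point `r`). -/
def HVC {n : ℕ} (f : BitString n → ℤ × ℤ) (r : ℤ × ℤ) (x : BitString n)
    (P : Finset (BitString n)) : ℤ :=
  ((f x).1 - (((P.filter fun z => (f z).1 < (f x).1).image fun z => (f z).1).max.unbotD r.1)) *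
  ((f x).2 - (((P.filter fun z => (f z).2 < (f x).2).image fun z => (f z).2).max.unbotD r.2))

/-- Crowding distance of `x` in `P` with respect to a single objective `g`: infinite for the
boundary points, and otherwise the normalised difference between successor and predecessor. -/
def CDCobj {n : ℕ} (g : BitString n → ℤ) (x : BitString n)
    (P : Finset (BitString n)) : ℝ≥0∞ :=
  if (∀ z ∈ P, g x ≤ g z) ∨ (∀ z ∈ P, g z ≤ g x) then ⊤
  else
    (((((P.filter fun z => g x < g z).image g).min.untopD 0 -
        (((P.filter fun z => g z < g x).image g).max.unbotD 0)).toNat : ℝ≥0∞)) /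
      ((((P.image g).max.unbotD 0 - ((P.image g).min.untopD 0)).toNat : ℝ≥0∞))

/-- The crowding distance contribution of `x` to `P`. -/
def CDC {n : ℕ} (f : BitString n → ℤ × ℤ) (x : BitString n)
    (P : Finset (BitString n)) : ℝ≥0∞ :=
  CDCobj (fun z => (f z).1) x P + CDCobj (fun z => (f z).2) x P

/-- A diversity measure `c` is diversity-favouring on `S`. -/
def diversityFavouring {n : ℕ} {α : Type*} [Preorder α] (f : BitString n → ℤ × ℤ)
    (c : BitString n → Finset (BitString n) → α) (S : Set (BitString n)) : Prop :=
  ∀ P : Finset (BitString n), mutuallyNonDominated f P →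
    ∀ x ∈ P, ∀ y ∈ P, x ∈ S → y ∈ S → isBad f P x → isGood f P y → c x P < c y P

/-- The default bit string (used only to make selection kernels total). -/
def defaultBS (n : ℕ) : BitString n := fun _ => false

/-- Local mutation: flip a single uniformly random bit. -/
def localMutation {n : ℕ} (hn : 0 < n) (x : BitString n) : PMF (BitString n) :=
  haveI : Nonempty (Fin n) := ⟨⟨0, hn⟩⟩
  (PMF.uniformOfFintype (Fin n)).map (flipBit x)

/-- A Bernoulli coin with success probability `1/n` (for `n ≥ 1`). -/
def bitFlipCoin (n : ℕ) : PMF Bool :=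
  PMF.bernoulli (min ((n : ℝ≥0∞))⁻¹ 1).toNNReal
    (by simpa using ENNReal.toNNReal_mono ENNReal.one_ne_top (min_le_right ((n : ℝ≥0∞))⁻¹ 1))

/-- Global (standard bit) mutation: flip each bit independently with probability `1/n`. -/
def globalMutationAux {n : ℕ} : List (Fin n) → BitString n → PMF (BitString n)
  | [], x => PMF.pure x
  | i :: is, x => (bitFlipCoin n).bind fun b =>
      globalMutationAux is (if b then flipBit x i else x)

def globalMutation {n : ℕ} (x : BitString n) : PMF (BitString n) :=
  globalMutationAux (List.finRange n) x

/-- Survival selection: if `s'` is not dominated by any member of `P`, add `s'` to `P` and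
remove all members weakly dominated by `s'`. -/
def updatePop {n : ℕ} (f : BitString n → ℤ × ℤ) (P : Finset (BitString n))
    (s' : BitString n) : Finset (BitString n) :=
  if ∃ z ∈ P, dominates f z s' then P
  else insert s' (P.filter fun z => ¬ weaklyDominates f s' z)

/-- One iteration of (G)SEMO with parent-selection kernel `select` and mutation `mutate`. -/
def step {n : ℕ} (f : BitString n → ℤ × ℤ)
    (select : Finset (BitString n) → PMF (BitString n))
    (mutate : BitString n → PMF (BitString n))
    (P : Finset (BitString n)) : PMF (Finset (BitString n)) :=
  (select P).bind fun s => (mutate s).map fun s' => updatePop f P s'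

/-- The L-dominant attribute `L(x) = LO(x) + TZ(x)`. -/
def Ldom {n : ℕ} (x : BitString n) : ℕ := leadingOnes x + trailingZeros x

/-- The subpopulation of points with maximum L-dominant attribute. -/
def maxLSub {n : ℕ} (P : Finset (BitString n)) : Finset (BitString n) :=
  P.filter fun x => ∀ z ∈ P, Ldom z ≤ Ldom x

/-- One iteration of the modified GSEMO: parent selection (and the diversity contribution)
is restricted to the subpopulation of points with maximum L-dominant attribute. -/
def stepMod {n : ℕ} (f : BitString n → ℤ × ℤ)
    (select : Finset (BitString n) → PMF (BitString n))
    (mutate : BitString n → PMF (BitString n))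
    (P : Finset (BitString n)) : PMF (Finset (BitString n)) :=
  (select (maxLSub P)).bind fun s => (mutate s).map fun s' => updatePop f P s'

/-- Initial population: a single uniformly random bit string. -/
def initDist (n : ℕ) : PMF (Finset (BitString n)) :=
  (PMF.uniformOfFintype (BitString n)).map fun x => {x}

/-- Distribution of the population after `t` iterations. -/
def stateDist {S : Type*} (init : PMF S) (st : S → PMF S) : ℕ → PMF S
  | 0 => init
  | t + 1 => (stateDist init st t).bind st

/-- Expected number of iterations until an (absorbing) goal predicate is reached,
expressed as `∑ₜ Pr[goal not yet reached at time t]`. -/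
def expectedRuntime {S : Type*} (init : PMF S) (st : S → PMF S) (goal : S → Prop) : ℝ≥0∞ :=
  ∑' t : ℕ, (stateDist init st t).toOuterMeasure {s | ¬ goal s}

/-- Uniform parent selection. -/
def uniformSelect {n : ℕ} (P : Finset (BitString n)) : PMF (BitString n) :=
  if h : P.Nonempty then PMF.uniformOfFinset P h else PMF.pure (defaultBS n)

/-- Highest Diversity Contribution (HDC) parent selection: select an individual with
maximum diversity contribution, ties broken uniformly at random. -/
def HDCSelect {n : ℕ} {α : Type*} [LinearOrder α]
    (c : BitString n → Finset (BitString n) → α)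
    (P : Finset (BitString n)) : PMF (BitString n) :=
  if h : P.Nonempty then
    PMF.uniformOfFinset (P.filter fun x => ∀ y ∈ P, c y P ≤ c x P)
      (by
        obtain ⟨b, hb, hmax⟩ := P.exists_max_image (fun x => c x P) h
        exact ⟨b, Finset.mem_filter.mpr ⟨hb, hmax⟩⟩)
  else PMF.pure (defaultBS n)

/-- Non-Minimum Uniform at Random (NMUAR) parent selection: select uniformly at random
among all individuals whose diversity contribution is not minimal (from the whole
population if all contributions are equal). -/
def NMUARSelect {n : ℕ} {α : Type*} [LinearOrder α]
    (c : BitString n → Finset (BitString n) → α)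
    (P : Finset (BitString n)) : PMF (BitString n) :=
  if h : P.Nonempty then
    if hQ : (P.filter fun x => ∃ y ∈ P, c y P < c x P).Nonempty then
      PMF.uniformOfFinset _ hQ
    else PMF.uniformOfFinset P h
  else PMF.pure (defaultBS n)

/-- Tournament selection with tournament size `μ = |P|`: draw `μ` individuals uniformly at
random with replacement from `P` and select one with the highest diversity contribution
among the drawn multiset (ties broken uniformly at random). -/
def tournamentSelect {n : ℕ} {α : Type*} [LinearOrder α]
    (c : BitString n → Finset (BitString n) → α)
    (P : Finset (BitString n)) : PMF (BitString n) :=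
  if h : P.Nonempty then
    haveI : Nonempty {x // x ∈ P} := h.to_subtype
    (PMF.uniformOfFintype (Fin P.card → {x // x ∈ P})).bind fun g =>
      PMF.uniformOfFinset
        ((Finset.univ.image fun i => ((g i : {x // x ∈ P}) : BitString n)).filter fun x =>
          ∀ y ∈ Finset.univ.image fun i => ((g i : {x // x ∈ P}) : BitString n), c y P ≤ c x P)
        (by
          have hne : (Finset.univ.image fun i => ((g i : {x // x ∈ P}) : BitString n)).Nonempty := by
            refine ⟨(g ⟨0, Finset.card_pos.mpr h⟩ : {x // x ∈ P}), ?_⟩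
            exact Finset.mem_image.mpr ⟨⟨0, Finset.card_pos.mpr h⟩, Finset.mem_univ _, rfl⟩
          obtain ⟨b, hb, hmax⟩ :=
            Finset.exists_max_image _ (fun x => c x P) hne
          exact ⟨b, Finset.mem_filter.mpr ⟨hb, hmax⟩⟩)
  else PMF.pure (defaultBS n)

/-- Exponential ranking scheme: probability of selecting the `i`-th ranked individual
(1-indexed) in a population of size `μ`. -/
def rExp (i μ : ℕ) : ℝ≥0∞ :=
  (2 : ℝ≥0∞)⁻¹ ^ i / ∑ j ∈ Finset.Icc 1 μ, (2 : ℝ≥0∞)⁻¹ ^ j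

/-- Power-law ranking scheme. -/
def rPow (i μ : ℕ) : ℝ≥0∞ :=
  ((i : ℝ≥0∞) ^ 2)⁻¹ / ∑ j ∈ Finset.Icc 1 μ, ((j : ℝ≥0∞) ^ 2)⁻¹

/-- Harmonic ranking scheme. -/
def rHarm (i μ : ℕ) : ℝ≥0∞ :=
  (i : ℝ≥0∞)⁻¹ / ∑ j ∈ Finset.Icc 1 μ, (j : ℝ≥0∞)⁻¹


/-- `select` implements a rank-based parent-selection scheme with rank probabilities
`r i μ` (1-indexed rank `i`, population size `μ`) with respect to the diversity
contribution `c`, for some non-increasing ordering of the population by `c`. -/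
def implementsRankScheme {n : ℕ} {α : Type*} [Preorder α]
    (c : BitString n → Finset (BitString n) → α) (r : ℕ → ℕ → ℝ≥0∞)
    (select : Finset (BitString n) → PMF (BitString n)) : Prop :=
  ∀ P : Finset (BitString n), P.Nonempty →
    ∃ l : List (BitString n), l.Nodup ∧ l.toFinset = P ∧
      l.Chain' (fun a b => c b P ≤ c a P) ∧
      (∀ i : Fin l.length, select P (l.get i) = r (i.val + 1) P.card) ∧
      (∀ x : BitString n, x ∉ P → select P x = 0)

/-- The Pareto-optimal point `1^i 0^(n-i)` of LOTZ. -/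
def opt (n i : ℕ) : BitString n := fun t => decide ((t : ℕ) < i)

/-- The whole Pareto set of LOTZ as a population. -/
def frontSet (n : ℕ) : Finset (BitString n) := (Finset.range (n + 1)).image (opt n)

/-- `P` has a gap at position `i`. -/
def hasGapAt {n : ℕ} (P : Finset (BitString n)) (i : ℕ) : Prop :=
  opt n i ∉ P ∧ (∃ j, j < i ∧ opt n j ∈ P) ∧ (∃ k, i < k ∧ k ≤ n ∧ opt n k ∈ P)

/-- `P` has a gap at some position `i` with `n/4 ≤ i ≤ 3n/4`. -/
def gapInRange (n : ℕ) (P : Finset (BitString n)) : Prop :=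
  ∃ i : ℕ, n ≤ 4 * i ∧ 4 * i ≤ 3 * n ∧ hasGapAt P i

/-- `P` contains both `0^n` and `1^n`. -/
def bothExtremes (n : ℕ) (P : Finset (BitString n)) : Prop :=
  allZeros n ∈ P ∧ allOnes n ∈ P

/-- The chain stopped (frozen) as soon as `cond` holds. -/
def stopWhen {S : Type*} (cond : S → Prop) (st : S → PMF S) (s : S) : PMF S :=
  if cond s then PMF.pure s else st s


lemma onesCount_flip_true {n : ℕ} (x : BitString n) (i : Fin n) (h : x i = true) :
    onesCount x = onesCount (flipBit x i) + 1 := by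
  have hset : (Finset.univ.filter fun j => flipBit x i j = true)
      = (Finset.univ.filter fun j => x j = true).erase i := by
    ext j
    rcases eq_or_ne j i with rfl | hj
    · simp [flipBit, Function.update_self, h]
    · rw [Finset.mem_filter]
      simp [flipBit, Function.update_of_ne hj, hj]
  have hi : i ∈ (Finset.univ.filter fun j => x j = true) := by simp [h]
  rw [onesCount, onesCount, hset, Finset.card_erase_of_mem hi]
  have := Finset.card_pos.mpr ⟨i, hi⟩
  omega

lemma onesCount_flip_false {n : ℕ} (x : BitString n) (i : Fin n) (h : x i = false) :
    onesCount (flipBit x i) = onesCount x + 1 := by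
  have hset : (Finset.univ.filter fun j => flipBit x i j = true)
      = insert i (Finset.univ.filter fun j => x j = true) := by
    ext j
    rcases eq_or_ne j i with rfl | hj
    · simp [flipBit, Function.update_self, h]
    · rw [Finset.mem_filter]
      simp [flipBit, Function.update_of_ne hj, hj]
  have hi : i ∉ (Finset.univ.filter fun j => x j = true) := by simp [h]
  rw [onesCount, onesCount, hset, Finset.card_insert_of_notMem hi]

lemma omm_pareto {n : ℕ} (w : BitString n) : paretoOptimal OneMinMax w := by
  rintro ⟨z, h1, h2, hne⟩
  simp only [OneMinMax] at h1 h2 hne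
  apply hne
  have : onesCount w = onesCount z := by omega
  rw [this]

-- ### LOTZ structural lemmas

lemma leadingOnes_char {n : ℕ} (x : BitString n) (i : Fin n) :
    (∀ j, j ≤ i → x j = true) ↔ (i : ℕ) < leadingOnes x := by
  constructor
  · intro h
    have hsub : Finset.Iic i ⊆ Finset.univ.filter
        (fun t : Fin n => ∀ j, j ≤ t → x j = true) := by
      intro t ht
      simp only [Finset.mem_Iic] at ht
      simp only [Finset.mem_filter, Finset.mem_univ, true_and]
      exact fun j hj => h j (hj.trans ht)
    have := Finset.card_le_card hsub
    rw [Fin.card_Iic] at this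
    unfold leadingOnes
    omega
  · intro h
    by_contra hc
    push_neg at hc
    obtain ⟨j, hj, hjf⟩ := hc
    have hsub : Finset.univ.filter (fun t : Fin n => ∀ j, j ≤ t → x j = true)
        ⊆ Finset.Iio i := by
      intro t ht
      simp only [Finset.mem_filter, Finset.mem_univ, true_and] at ht
      simp only [Finset.mem_Iio]
      by_contra hti
      push_neg at hti
      exact hjf (ht j (hj.trans hti))
    have := Finset.card_le_card hsub
    rw [Fin.card_Iio] at this
    unfold leadingOnes at h
    omega

lemma trailingZeros_char {n : ℕ} (x : BitString n) (i : Fin n) :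
    (∀ j, i ≤ j → x j = false) ↔ n - trailingZeros x ≤ (i : ℕ) := by
  constructor
  · intro h
    have hsub : Finset.Ici i ⊆ Finset.univ.filter
        (fun t : Fin n => ∀ j, t ≤ j → x j = false) := by
      intro t ht
      simp only [Finset.mem_Ici] at ht
      simp only [Finset.mem_filter, Finset.mem_univ, true_and]
      exact fun j hj => h j (ht.trans hj)
    have := Finset.card_le_card hsub
    rw [Fin.card_Ici] at this
    unfold trailingZeros
    omega
  · intro h
    by_contra hc
    push_neg at hc
    obtain ⟨j, hj, hjf⟩ := hc
    have hsub : Finset.univ.filter (fun t : Fin n => ∀ j, t ≤ j → x j = false)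
        ⊆ Finset.Ioi i := by
      intro t ht
      simp only [Finset.mem_filter, Finset.mem_univ, true_and] at ht
      simp only [Finset.mem_Ioi]
      by_contra hti
      push_neg at hti
      exact hjf (ht j (hti.trans hj))
    have := Finset.card_le_card hsub
    rw [Fin.card_Ioi] at this
    have hin := i.isLt
    unfold trailingZeros at h
    omega

lemma leadingOnes_le {n : ℕ} (x : BitString n) : leadingOnes x ≤ n := by
  have := Finset.card_filter_le Finset.univ
    (fun i : Fin n => ∀ j : Fin n, j ≤ i → x j = true)
  simpa [leadingOnes] using this

lemma trailingZeros_le {n : ℕ} (x : BitString n) : trailingZeros x ≤ n := by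
  have := Finset.card_filter_le Finset.univ
    (fun i : Fin n => ∀ j : Fin n, i ≤ j → x j = false)
  simpa [trailingZeros] using this

lemma lo_add_tz_le {n : ℕ} (x : BitString n) : leadingOnes x + trailingZeros x ≤ n := by
  by_contra h
  push_neg at h
  have hLO := leadingOnes_le x
  have hTZ := trailingZeros_le x
  rcases Nat.eq_zero_or_pos n with rfl | hn
  · omega
  · have hlt2 : n - trailingZeros x < n := by omega
    have h1 := (leadingOnes_char x ⟨n - trailingZeros x, hlt2⟩).mpr
      (show n - trailingZeros x < leadingOnes x by omega)
    have h2 := (trailingZeros_char x ⟨n - trailingZeros x, hlt2⟩).mpr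
      (show n - trailingZeros x ≤ n - trailingZeros x from le_rfl)
    have e1 := h1 ⟨n - trailingZeros x, hlt2⟩ le_rfl
    have e2 := h2 ⟨n - trailingZeros x, hlt2⟩ le_rfl
    rw [e1] at e2
    exact Bool.noConfusion e2

lemma leadingOnes_opt {n : ℕ} (k : ℕ) (hk : k ≤ n) : leadingOnes (opt n k) = k := by
  have hset : (Finset.univ.filter fun i : Fin n => ∀ j : Fin n, j ≤ i → opt n k j = true)
      = Finset.univ.filter (fun i : Fin n => (i : ℕ) < k) := by
    ext i
    simp only [Finset.mem_filter, Finset.mem_univ, true_and, opt, decide_eq_true_eq]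
    constructor
    · exact fun h => h i le_rfl
    · exact fun h j hj => lt_of_le_of_lt (Fin.le_iff_val_le_val.mp hj) h
  have himg : ((Finset.univ.filter fun i : Fin n => (i : ℕ) < k).image Fin.val)
      = Finset.range k := by
    ext m
    simp only [Finset.mem_image, Finset.mem_filter, Finset.mem_univ, true_and,
      Finset.mem_range]
    constructor
    · rintro ⟨i, hi, rfl⟩; exact hi
    · intro hm; exact ⟨⟨m, lt_of_lt_of_le hm hk⟩, hm, rfl⟩
  rw [leadingOnes, hset, ← Finset.card_image_of_injective _ Fin.val_injective, himg,
    Finset.card_range]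

lemma trailingZeros_opt {n : ℕ} (k : ℕ) (hk : k ≤ n) : trailingZeros (opt n k) = n - k := by
  have hset : (Finset.univ.filter fun i : Fin n => ∀ j : Fin n, i ≤ j → opt n k j = false)
      = Finset.univ.filter (fun i : Fin n => ¬ ((i : ℕ) < k)) := by
    ext i
    simp only [Finset.mem_filter, Finset.mem_univ, true_and, opt, decide_eq_false_iff_not,
      not_lt]
    constructor
    · exact fun h => h i le_rfl
    · exact fun h j hj => h.trans (Fin.le_iff_val_le_val.mp hj)
  have hcard := Finset.card_filter_add_card_filter_not
    (s := (Finset.univ : Finset (Fin n))) (p := fun i : Fin n => (i : ℕ) < k)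
  have h1 : (Finset.univ.filter (fun i : Fin n => (i : ℕ) < k)).card = k := by
    have himg : ((Finset.univ.filter fun i : Fin n => (i : ℕ) < k).image Fin.val)
        = Finset.range k := by
      ext m
      simp only [Finset.mem_image, Finset.mem_filter, Finset.mem_univ, true_and,
        Finset.mem_range]
      constructor
      · rintro ⟨i, hi, rfl⟩; exact hi
      · intro hm; exact ⟨⟨m, lt_of_lt_of_le hm hk⟩, hm, rfl⟩
    rw [← Finset.card_image_of_injective _ Fin.val_injective, himg, Finset.card_range]
  rw [trailingZeros, hset]
  simp only [Finset.card_univ, Fintype.card_fin] at hcard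
  omega

lemma eq_opt_of_sum {n : ℕ} (x : BitString n)
    (h : leadingOnes x + trailingZeros x = n) : x = opt n (leadingOnes x) := by
  funext t
  by_cases ht : (t : ℕ) < leadingOnes x
  · have := (leadingOnes_char x t).mpr ht t le_rfl
    simp [opt, this, ht]
  · have h2 : n - trailingZeros x ≤ (t : ℕ) := by omega
    have := (trailingZeros_char x t).mpr h2 t le_rfl
    simp [opt, this, ht]

lemma sum_eq_of_pareto {n : ℕ} (x : BitString n) (h : paretoOptimal LOTZ x) :
    leadingOnes x + trailingZeros x = n := by
  have hle := lo_add_tz_le x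
  by_contra hne'
  have hlt : leadingOnes x + trailingZeros x < n := by omega
  have hTZ := trailingZeros_le x
  apply h
  have hsub : n - trailingZeros x ≤ n := by omega
  have e1 := leadingOnes_opt (n := n) (n - trailingZeros x) hsub
  have e2 := trailingZeros_opt (n := n) (n - trailingZeros x) hsub
  refine ⟨opt n (n - trailingZeros x), ?_, ?_, ?_⟩
  · simp only [LOTZ, e1]
    omega
  · simp only [LOTZ, e2]
    omega
  · simp only [LOTZ]
    intro hc
    rw [Prod.mk.injEq] at hc
    rw [e1] at hc
    exact absurd hc.1 (by omega)

lemma opt_pareto {n : ℕ} (k : ℕ) (hk : k ≤ n) : paretoOptimal LOTZ (opt n k) := by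
  rintro ⟨w, h1, h2, hne⟩
  simp only [LOTZ, leadingOnes_opt k hk, trailingZeros_opt k hk] at h1 h2 hne
  have hw := lo_add_tz_le w
  have e1 : leadingOnes w = k := by omega
  have e2 : trailingZeros w = n - k := by omega
  exact hne (by rw [e1, e2])

lemma flip_ne {n : ℕ} (x : BitString n) (i : Fin n) : flipBit x i i ≠ x i := by
  simp [flipBit, Function.update_self]

lemma flip_eq_of_ne {n : ℕ} (x : BitString n) (i t : Fin n) (h : t ≠ i) :
    flipBit x i t = x t := by
  simp [flipBit, Function.update_of_ne h]

lemma flip_opt_up {n : ℕ} (k : ℕ) (hk : k < n) :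
    flipBit (opt n k) ⟨k, hk⟩ = opt n (k + 1) := by
  funext t
  rcases eq_or_ne t ⟨k, hk⟩ with rfl | ht
  · simp [flipBit, Function.update_self, opt]
  · rw [flip_eq_of_ne _ _ _ ht]
    have : (t : ℕ) ≠ k := fun hc => ht (Fin.ext hc)
    simp only [opt]
    exact decide_eq_decide.mpr (by omega)

lemma flip_opt_down {n : ℕ} (k : ℕ) (hk0 : 0 < k) (hk : k ≤ n) :
    flipBit (opt n k) ⟨k - 1, by omega⟩ = opt n (k - 1) := by
  funext t
  rcases eq_or_ne t ⟨k - 1, by omega⟩ with rfl | ht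
  · simp only [flipBit, Function.update_self, opt]
    have h1 : (k - 1 : ℕ) < k := by omega
    have h2 : ¬ ((k - 1 : ℕ) < k - 1) := by omega
    simp [h1, h2]
  · rw [flip_eq_of_ne _ _ _ ht]
    have : (t : ℕ) ≠ k - 1 := fun hc => ht (Fin.ext hc)
    simp only [opt]
    exact decide_eq_decide.mpr (by omega)

lemma opt_zero (n : ℕ) : opt n 0 = allZeros n := by
  funext t; simp [opt, allZeros]

lemma opt_n (n : ℕ) : opt n n = allOnes n := by
  funext t; simp [opt, allOnes, t.isLt]

def cdcDen {n : ℕ} (g : BitString n → ℤ) (P : Finset (BitString n)) : ℝ≥0∞ :=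
  ((((P.image g).max.unbotD 0 - ((P.image g).min.untopD 0)).toNat : ℝ≥0∞))

lemma cdc_eq_two {n : ℕ} (g : BitString n → ℤ) (P : Finset (BitString n)) (x : BitString n)
    (hm : ∃ z ∈ P, g z = g x - 1) (hp : ∃ z ∈ P, g z = g x + 1) :
    CDCobj g x P = 2 / cdcDen g P := by
  obtain ⟨zm, hzm, hzm'⟩ := hm
  obtain ⟨zp, hzp, hzp'⟩ := hp
  rw [CDCobj, if_neg]
  · have hA : ((P.filter fun z => g x < g z).image g).min = (↑(g x + 1) : WithTop ℤ) := by
      apply le_antisymm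
      · exact Finset.min_le (hzp' ▸ Finset.mem_image_of_mem g
          (Finset.mem_filter.mpr ⟨hzp, by omega⟩))
      · apply Finset.le_min
        intro b hb
        obtain ⟨z, hz, rfl⟩ := Finset.mem_image.mp hb
        exact_mod_cast (by have := (Finset.mem_filter.mp hz).2; omega : g x + 1 ≤ g z)
    have hB : ((P.filter fun z => g z < g x).image g).max = (↑(g x - 1) : WithBot ℤ) := by
      apply le_antisymm
      · apply Finset.max_le
        intro b hb
        obtain ⟨z, hz, rfl⟩ := Finset.mem_image.mp hb
        exact_mod_cast (by have := (Finset.mem_filter.mp hz).2; omega : g z ≤ g x - 1)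
      · exact Finset.le_max (hzm' ▸ Finset.mem_image_of_mem g
          (Finset.mem_filter.mpr ⟨hzm, by omega⟩))
    rw [hA, hB, WithTop.untopD_coe, WithBot.unbotD_coe, cdcDen]
    congr 1
    simp
  · push_neg
    exact ⟨⟨zm, hzm, by omega⟩, ⟨zp, hzp, by omega⟩⟩

lemma cdc_ge {n : ℕ} (g : BitString n → ℤ) (P : Finset (BitString n)) (x : BitString n)
    (hb : ¬ ((∀ z ∈ P, g x ≤ g z) ∨ (∀ z ∈ P, g z ≤ g x)))
    (s p : ℤ) (hs : ∀ z ∈ P, g x < g z → s ≤ g z) (hp : ∀ z ∈ P, g z < g x → g z ≤ p) :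
    ((s - p).toNat : ℝ≥0∞) / cdcDen g P ≤ CDCobj g x P := by
  rw [CDCobj, if_neg hb]
  push_neg at hb
  obtain ⟨⟨zm, hzm, hzm'⟩, ⟨zp, hzp, hzp'⟩⟩ := hb
  have hAne : ((P.filter fun z => g x < g z).image g).Nonempty :=
    ⟨g zp, Finset.mem_image_of_mem g (Finset.mem_filter.mpr ⟨hzp, hzp'⟩)⟩
  have hBne : ((P.filter fun z => g z < g x).image g).Nonempty :=
    ⟨g zm, Finset.mem_image_of_mem g (Finset.mem_filter.mpr ⟨hzm, hzm'⟩)⟩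
  have hA : s ≤ ((P.filter fun z => g x < g z).image g).min.untopD 0 := by
    rw [← Finset.coe_min' hAne, WithTop.untopD_coe]
    obtain ⟨z, hz, hz'⟩ := Finset.mem_image.mp (Finset.min'_mem _ hAne)
    rw [← hz']
    exact hs z (Finset.mem_filter.mp hz).1 (Finset.mem_filter.mp hz).2
  have hB : ((P.filter fun z => g z < g x).image g).max.unbotD 0 ≤ p := by
    rw [← Finset.coe_max' hBne, WithBot.unbotD_coe]
    obtain ⟨z, hz, hz'⟩ := Finset.mem_image.mp (Finset.max'_mem _ hBne)
    rw [← hz']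
    exact hp z (Finset.mem_filter.mp hz).1 (Finset.mem_filter.mp hz).2
  rw [cdcDen]
  exact ENNReal.div_le_div_right (Nat.cast_le.mpr (Int.toNat_le_toNat (by omega))) _

lemma cdc_top {n : ℕ} (g : BitString n → ℤ) (P : Finset (BitString n)) (x : BitString n)
    (hb : (∀ z ∈ P, g x ≤ g z) ∨ (∀ z ∈ P, g z ≤ g x)) : CDCobj g x P = ⊤ := by
  rw [CDCobj, if_pos hb]

lemma den_facts {n : ℕ} (g : BitString n → ℤ) (P : Finset (BitString n)) (a : ℤ)
    (hm : ∃ z ∈ P, g z = a - 1) (hp : ∃ z ∈ P, g z = a + 1) :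
    cdcDen g P ≠ 0 ∧ cdcDen g P ≠ ⊤ := by
  obtain ⟨zm, hzm, hzm'⟩ := hm
  obtain ⟨zp, hzp, hzp'⟩ := hp
  have hne : (P.image g).Nonempty := ⟨g zm, Finset.mem_image_of_mem g hzm⟩
  constructor
  · have h1 : a + 1 ≤ (P.image g).max.unbotD 0 := by
      rw [← Finset.coe_max' hne, WithBot.unbotD_coe]
      exact hzp' ▸ Finset.le_max' _ _ (Finset.mem_image_of_mem g hzp)
    have h2 : (P.image g).min.untopD 0 ≤ a - 1 := by
      rw [← Finset.coe_min' hne, WithTop.untopD_coe]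
      exact hzm' ▸ Finset.min'_le _ _ (Finset.mem_image_of_mem g hzm)
    rw [cdcDen]
    exact_mod_cast (by omega : ((P.image g).max.unbotD 0 - (P.image g).min.untopD 0).toNat ≠ 0)
  · exact ENNReal.natCast_ne_top _

lemma div_fin (c D : ℝ≥0∞) (hc : c ≠ ⊤) (h : D ≠ 0) : c / D ≠ ⊤ := by
  simp [ENNReal.div_eq_top, h, hc]

lemma two_div_lt_three_div (D : ℝ≥0∞) (h : D ≠ 0) (h' : D ≠ ⊤) : 2 / D < 3 / D := by
  rw [div_eq_mul_inv, div_eq_mul_inv]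
  exact ENNReal.mul_lt_mul_left (by simpa using h') (by simpa using h) (by norm_num)

lemma arith (D₁ D₂ a b : ℝ≥0∞) (h1 : D₁ ≠ 0) (h1' : D₁ ≠ ⊤) (h2 : D₂ ≠ 0) (h2' : D₂ ≠ ⊤)
    (h : (3/D₁ ≤ a ∧ 2/D₂ ≤ b) ∨ (2/D₁ ≤ a ∧ 3/D₂ ≤ b)) :
    2/D₁ + 2/D₂ < a + b := by
  have hf1 : (2:ℝ≥0∞)/D₁ ≠ ⊤ := div_fin 2 D₁ (by norm_num) h1
  have hf2 : (2:ℝ≥0∞)/D₂ ≠ ⊤ := div_fin 2 D₂ (by norm_num) h2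
  rcases h with ⟨ha, hb⟩ | ⟨ha, hb⟩
  · calc 2/D₁ + 2/D₂ < 3/D₁ + 2/D₂ :=
          ENNReal.add_lt_add_right hf2 (two_div_lt_three_div D₁ h1 h1')
    _ ≤ a + b := add_le_add ha hb
  · calc 2/D₁ + 2/D₂ < 2/D₁ + 3/D₂ :=
          ENNReal.add_lt_add_left hf1 (two_div_lt_three_div D₂ h2 h2')
    _ ≤ a + b := add_le_add ha hb

lemma cdc_ge_two' {n : ℕ} (g : BitString n → ℤ) (P : Finset (BitString n)) (x : BitString n)
    (hb : ¬ ((∀ z ∈ P, g x ≤ g z) ∨ (∀ z ∈ P, g z ≤ g x))) :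
    2 / cdcDen g P ≤ CDCobj g x P := by
  have H := cdc_ge g P x hb (g x + 1) (g x - 1)
    (fun z _ h => by omega) (fun z _ h => by omega)
  have e : (g x + 1 - (g x - 1)) = 2 := by ring
  rw [e] at H
  simpa using H

lemma cdc_ge_three_plus {n : ℕ} (g : BitString n → ℤ) (P : Finset (BitString n))
    (x : BitString n) (hb : ¬ ((∀ z ∈ P, g x ≤ g z) ∨ (∀ z ∈ P, g z ≤ g x)))
    (hm : ∀ z ∈ P, g z ≠ g x + 1) :
    3 / cdcDen g P ≤ CDCobj g x P := by
  have H := cdc_ge g P x hb (g x + 2) (g x - 1)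
    (fun z hz h => by have := hm z hz; omega) (fun z _ h => by omega)
  have e : (g x + 2 - (g x - 1)) = 3 := by ring
  rw [e] at H
  simpa using H

lemma cdc_ge_three_minus {n : ℕ} (g : BitString n → ℤ) (P : Finset (BitString n))
    (x : BitString n) (hb : ¬ ((∀ z ∈ P, g x ≤ g z) ∨ (∀ z ∈ P, g z ≤ g x)))
    (hm : ∀ z ∈ P, g z ≠ g x - 1) :
    3 / cdcDen g P ≤ CDCobj g x P := by
  have H := cdc_ge g P x hb (g x + 1) (g x - 2)
    (fun z _ h => by omega) (fun z hz h => by have := hm z hz; omega)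
  have e : (g x + 1 - (g x - 2)) = 3 := by ring
  rw [e] at H
  simpa using H

lemma neighbour_class {n : ℕ} (k : ℕ) (hk0 : 0 < k) (hkn : k < n) (i : Fin n)
    (hpo : paretoOptimal LOTZ (flipBit (opt n k) i)) :
    LOTZ (flipBit (opt n k) i) = ((k:ℤ) - 1, (n:ℤ) - k + 1) ∨
    LOTZ (flipBit (opt n k) i) = ((k:ℤ) + 1, (n:ℤ) - k - 1) := by
  have hsum := sum_eq_of_pareto _ hpo
  have hw : flipBit (opt n k) i = opt n (leadingOnes (flipBit (opt n k) i)) :=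
    eq_opt_of_sum _ hsum
  set m := leadingOnes (flipBit (opt n k) i) with hm
  have hmle : m ≤ n := leadingOnes_le _
  have hdiff : ∀ t : Fin n, t ≠ i → opt n m t = opt n k t := by
    intro t ht
    rw [← hw]
    exact flip_eq_of_ne _ _ _ ht
  have hdi : opt n m i ≠ opt n k i := by
    rw [← hw]; exact flip_ne _ _
  have hmk : m ≠ k := by
    intro h
    apply hdi
    rw [h]
  rcases lt_or_gt_of_ne hmk with hlt | hgt
  · -- m < k : show m = k - 1
    left
    have hmn : m < n := by omega
    have ht0 : (⟨m, hmn⟩ : Fin n) = i := by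
      by_contra hne
      have h1 : opt n m (⟨m, hmn⟩ : Fin n) = false := by simp [opt]
      have h2 : opt n k (⟨m, hmn⟩ : Fin n) = true := by
        simp only [opt, decide_eq_true_eq]
        exact hlt
      have := hdiff _ hne
      rw [h1, h2] at this
      exact Bool.noConfusion this
    have hm1 : m + 1 = k := by
      by_contra hne
      have hlt2 : m + 1 < k := by omega
      have hmn2 : m + 1 < n := by omega
      have ht1 : (⟨m + 1, hmn2⟩ : Fin n) = i := by
        by_contra hne2
        have h1 : opt n m (⟨m + 1, hmn2⟩ : Fin n) = false := by
          simp only [opt, decide_eq_false_iff_not]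
          omega
        have h2 : opt n k (⟨m + 1, hmn2⟩ : Fin n) = true := by
          simp only [opt, decide_eq_true_eq]
          exact hlt2
        have := hdiff _ hne2
        rw [h1, h2] at this
        exact Bool.noConfusion this
      have := congrArg Fin.val (ht1.trans ht0.symm)
      simp at this
    rw [hw]
    simp only [LOTZ, leadingOnes_opt m hmle, trailingZeros_opt m hmle, ← hm]
    rw [Prod.mk.injEq]
    exact ⟨by omega, by omega⟩
  · -- k < m : show m = k + 1
    right
    have ht0 : (⟨k, hkn⟩ : Fin n) = i := by
      by_contra hne
      have h1 : opt n m (⟨k, hkn⟩ : Fin n) = true := by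
        simp only [opt, decide_eq_true_eq]
        exact hgt
      have h2 : opt n k (⟨k, hkn⟩ : Fin n) = false := by simp [opt]
      have := hdiff _ hne
      rw [h1, h2] at this
      exact Bool.noConfusion this
    have hm1 : m = k + 1 := by
      by_contra hne
      have hlt2 : k + 1 < m := by omega
      have hkn2 : k + 1 < n := by omega
      have ht1 : (⟨k + 1, hkn2⟩ : Fin n) = i := by
        by_contra hne2
        have h1 : opt n m (⟨k + 1, hkn2⟩ : Fin n) = true := by
          simp only [opt, decide_eq_true_eq]
          exact hlt2
        have h2 : opt n k (⟨k + 1, hkn2⟩ : Fin n) = false := by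
          simp only [opt, decide_eq_false_iff_not]
          omega
        have := hdiff _ hne2
        rw [h1, h2] at this
        exact Bool.noConfusion this
      have := congrArg Fin.val (ht1.trans ht0.symm)
      simp at this
    rw [hw]
    simp only [LOTZ, leadingOnes_opt m hmle, trailingZeros_opt m hmle, ← hm]
    rw [Prod.mk.injEq]
    exact ⟨by omega, by omega⟩

lemma lotz_missing_left {n : ℕ} (P : Finset (BitString n))
    (hP : mutuallyNonDominated LOTZ P) (k : ℕ) (hk0 : 0 < k) (hkn : k < n)
    (hy : opt n k ∈ P) (hun : ∀ z ∈ P, LOTZ z ≠ ((k:ℤ) - 1, (n:ℤ) - k + 1)) :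
    ∀ z ∈ P, (LOTZ z).1 ≠ (k:ℤ) - 1 := by
  intro z hz hc
  simp only [LOTZ] at hc
  have hlo : leadingOnes z = k - 1 := by omega
  have hsum := lo_add_tz_le z
  have hTZ := trailingZeros_le z
  have ea : leadingOnes (opt n (k-1)) = k - 1 := leadingOnes_opt (k-1) (by omega)
  have eb : trailingZeros (opt n (k-1)) = n - (k-1) := trailingZeros_opt (k-1) (by omega)
  have ec : leadingOnes (opt n k) = k := leadingOnes_opt k (by omega)
  have ed : trailingZeros (opt n k) = n - k := trailingZeros_opt k (by omega)
  by_cases htz : trailingZeros z = n - k + 1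
  · have hz2 : z = opt n (leadingOnes z) := eq_opt_of_sum z (by omega)
    apply hun z hz
    rw [hz2, hlo]
    simp only [LOTZ, ea, eb]
    rw [Prod.mk.injEq]
    exact ⟨by omega, by omega⟩
  · have htz2 : trailingZeros z ≤ n - k := by omega
    apply hP z hz (opt n k) hy
    refine ⟨?_, ?_, ?_⟩
    · simp only [LOTZ, ec]
      omega
    · simp only [LOTZ, ed]
      omega
    · simp only [LOTZ, ec]
      intro hceq
      rw [Prod.mk.injEq] at hceq
      exact absurd hceq.1 (by omega)

lemma lotz_missing_right {n : ℕ} (P : Finset (BitString n))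
    (hP : mutuallyNonDominated LOTZ P) (k : ℕ) (hk0 : 0 < k) (hkn : k < n)
    (hy : opt n k ∈ P) (hun : ∀ z ∈ P, LOTZ z ≠ ((k:ℤ) + 1, (n:ℤ) - k - 1)) :
    ∀ z ∈ P, (LOTZ z).2 ≠ (n:ℤ) - (k:ℤ) - 1 := by
  intro z hz hc
  simp only [LOTZ] at hc
  have htz : trailingZeros z = n - k - 1 := by omega
  have hsum := lo_add_tz_le z
  have ea : leadingOnes (opt n (k+1)) = k + 1 := leadingOnes_opt (k+1) (by omega)
  have eb : trailingZeros (opt n (k+1)) = n - (k+1) := trailingZeros_opt (k+1) (by omega)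
  have ec : leadingOnes (opt n k) = k := leadingOnes_opt k (by omega)
  have ed : trailingZeros (opt n k) = n - k := trailingZeros_opt k (by omega)
  by_cases hlo : leadingOnes z = k + 1
  · have hz2 : z = opt n (leadingOnes z) := eq_opt_of_sum z (by omega)
    apply hun z hz
    rw [hz2, hlo]
    simp only [LOTZ, ea, eb]
    rw [Prod.mk.injEq]
    exact ⟨by omega, by omega⟩
  · have hlo2 : leadingOnes z ≤ k := by omega
    apply hP z hz (opt n k) hy
    refine ⟨?_, ?_, ?_⟩
    · simp only [LOTZ, ec]
      omega
    · simp only [LOTZ, ed]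
      omega
    · simp only [LOTZ, ed]
      intro hceq
      rw [Prod.mk.injEq] at hceq
      exact absurd hceq.2 (by omega)

lemma main_aux {n : ℕ} (f : BitString n → ℤ × ℤ) (P : Finset (BitString n))
    (x y : BitString n)
    (hxm : ∃ z ∈ P, (f z).1 = (f x).1 - 1) (hxp : ∃ z ∈ P, (f z).1 = (f x).1 + 1)
    (hxm2 : ∃ z ∈ P, (f z).2 = (f x).2 - 1) (hxp2 : ∃ z ∈ P, (f z).2 = (f x).2 + 1)
    (hmiss : (∀ z ∈ P, (f z).1 ≠ (f y).1 - 1) ∨ (∀ z ∈ P, (f z).1 ≠ (f y).1 + 1) ∨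
             (∀ z ∈ P, (f z).2 ≠ (f y).2 - 1) ∨ (∀ z ∈ P, (f z).2 ≠ (f y).2 + 1)) :
    CDC f x P < CDC f y P := by
  have hx1 : CDCobj (fun z => (f z).1) x P = 2 / cdcDen (fun z => (f z).1) P :=
    cdc_eq_two _ P x hxm hxp
  have hx2 : CDCobj (fun z => (f z).2) x P = 2 / cdcDen (fun z => (f z).2) P :=
    cdc_eq_two _ P x hxm2 hxp2
  obtain ⟨hd1, hd1'⟩ := den_facts (fun z => (f z).1) P ((f x).1) hxm hxp
  obtain ⟨hd2, hd2'⟩ := den_facts (fun z => (f z).2) P ((f x).2) hxm2 hxp2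
  have hCDCx : CDC f x P
      = 2 / cdcDen (fun z => (f z).1) P + 2 / cdcDen (fun z => (f z).2) P := by
    rw [CDC, hx1, hx2]
  have hfin : CDC f x P ≠ ⊤ := by
    rw [hCDCx]
    exact ENNReal.add_ne_top.mpr ⟨div_fin 2 _ (by norm_num) hd1, div_fin 2 _ (by norm_num) hd2⟩
  by_cases hb1 : (∀ z ∈ P, (f y).1 ≤ (f z).1) ∨ (∀ z ∈ P, (f z).1 ≤ (f y).1)
  · have ht : CDCobj (fun z => (f z).1) y P = ⊤ := cdc_top _ _ _ hb1
    have hty : CDC f y P = ⊤ := by rw [CDC, ht]; simp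
    rw [hty]
    exact lt_top_iff_ne_top.mpr hfin
  by_cases hb2 : (∀ z ∈ P, (f y).2 ≤ (f z).2) ∨ (∀ z ∈ P, (f z).2 ≤ (f y).2)
  · have ht : CDCobj (fun z => (f z).2) y P = ⊤ := cdc_top _ _ _ hb2
    have hty : CDC f y P = ⊤ := by rw [CDC, ht]; simp
    rw [hty]
    exact lt_top_iff_ne_top.mpr hfin
  rw [hCDCx, CDC]
  apply arith _ _ _ _ hd1 hd1' hd2 hd2'
  rcases hmiss with hm | hm | hm | hm
  · exact Or.inl ⟨cdc_ge_three_minus _ P y hb1 hm, cdc_ge_two' _ P y hb2⟩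
  · exact Or.inl ⟨cdc_ge_three_plus _ P y hb1 hm, cdc_ge_two' _ P y hb2⟩
  · exact Or.inr ⟨cdc_ge_two' _ P y hb1, cdc_ge_three_minus _ P y hb2 hm⟩
  · exact Or.inr ⟨cdc_ge_two' _ P y hb1, cdc_ge_three_plus _ P y hb2 hm⟩

/-- For OneMinMax and LOTZ, the crowding distance contribution is
diversity-favouring on `{0,1}ⁿ \ {0ⁿ, 1ⁿ}`. -/
theorem cdc_diversity_favouring (n : ℕ) (f : BitString n → ℤ × ℤ)
    (hf : f = OneMinMax ∨ f = LOTZ)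
    (P : Finset (BitString n)) (hP : mutuallyNonDominated f P)
    (x y : BitString n) (hx : x ∈ P) (hy : y ∈ P)
    (hxo : paretoOptimal f x) (hyo : paretoOptimal f y)
    (hx0 : x ≠ allZeros n) (hx1 : x ≠ allOnes n)
    (hy0 : y ≠ allZeros n) (hy1 : y ≠ allOnes n) :
    isBad f P x → isGood f P y → CDC f x P < CDC f y P := by
  intro hbad hgood
  obtain ⟨-, hbad2⟩ := hbad
  obtain ⟨-, w, hnbw, hwopt, hwun⟩ := hgood
  push_neg at hbad2
  obtain ⟨iy, rfl⟩ := hnbw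
  rcases hf with rfl | rfl
  · -- OneMinMax
    obtain ⟨it, hit⟩ : ∃ i, x i = true := by
      by_contra hc
      push_neg at hc
      refine hx0 (funext fun t => ?_)
      rcases Bool.eq_false_or_eq_true (x t) with h | h
      · exact absurd h (hc t)
      · exact h
    obtain ⟨jf, hjf⟩ : ∃ j, x j = false := by
      by_contra hc
      push_neg at hc
      refine hx1 (funext fun t => ?_)
      rcases Bool.eq_false_or_eq_true (x t) with h | h
      · exact h
      · exact absurd h (hc t)
    have hct := onesCount_flip_true x it hit
    have hcf := onesCount_flip_false x jf hjf
    obtain ⟨zm, hzm, hzmf⟩ := hbad2 (flipBit x it) ⟨it, rfl⟩ (omm_pareto _)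
    obtain ⟨zp, hzp, hzpf⟩ := hbad2 (flipBit x jf) ⟨jf, rfl⟩ (omm_pareto _)
    apply main_aux
    · exact ⟨zm, hzm, by rw [hzmf]; simp only [OneMinMax]; omega⟩
    · exact ⟨zp, hzp, by rw [hzpf]; simp only [OneMinMax]; omega⟩
    · exact ⟨zp, hzp, by rw [hzpf]; simp only [OneMinMax]; omega⟩
    · exact ⟨zm, hzm, by rw [hzmf]; simp only [OneMinMax]; omega⟩
    · rcases Bool.eq_false_or_eq_true (y iy) with hyi | hyi
      · have hcw := onesCount_flip_true y iy hyi
        refine Or.inl ?_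
        intro z hz hcc
        apply hwun z hz
        simp only [OneMinMax] at hcc ⊢
        have hoc : onesCount z = onesCount (flipBit y iy) := by omega
        rw [hoc]
      · have hcw := onesCount_flip_false y iy hyi
        refine Or.inr (Or.inl ?_)
        intro z hz hcc
        apply hwun z hz
        simp only [OneMinMax] at hcc ⊢
        have hoc : onesCount z = onesCount (flipBit y iy) := by omega
        rw [hoc]
  · -- LOTZ
    have hsx := sum_eq_of_pareto x hxo
    have hxeq : x = opt n (leadingOnes x) := eq_opt_of_sum x hsx
    have hxle := leadingOnes_le x
    set a := leadingOnes x with ha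
    have ha0 : a ≠ 0 := by
      intro h
      exact hx0 (by rw [hxeq, h, opt_zero])
    have han : a ≠ n := by
      intro h
      exact hx1 (by rw [hxeq, h, opt_n])
    obtain ⟨zm, hzm, hzmf⟩ := hbad2 (opt n (a - 1))
      ⟨⟨a - 1, by omega⟩, by
        have h := flip_opt_down (n := n) a (by omega) (by omega)
        rw [← hxeq] at h
        exact h.symm⟩
      (opt_pareto _ (by omega))
    obtain ⟨zp, hzp, hzpf⟩ := hbad2 (opt n (a + 1))
      ⟨⟨a, by omega⟩, by
        have h := flip_opt_up (n := n) a (by omega)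
        rw [← hxeq] at h
        exact h.symm⟩
      (opt_pareto _ (by omega))
    have em1 : leadingOnes (opt n (a - 1)) = a - 1 :=
      leadingOnes_opt _ (by omega)
    have em2 : trailingZeros (opt n (a - 1)) = n - (a - 1) :=
      trailingZeros_opt _ (by omega)
    have ep1 : leadingOnes (opt n (a + 1)) = a + 1 :=
      leadingOnes_opt _ (by omega)
    have ep2 : trailingZeros (opt n (a + 1)) = n - (a + 1) :=
      trailingZeros_opt _ (by omega)
    have hxm : ∃ z ∈ P, (LOTZ z).1 = (LOTZ x).1 - 1 :=
      ⟨zm, hzm, by rw [hzmf]; simp only [LOTZ, em1]; omega⟩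
    have hxp : ∃ z ∈ P, (LOTZ z).1 = (LOTZ x).1 + 1 :=
      ⟨zp, hzp, by rw [hzpf]; simp only [LOTZ, ep1]; omega⟩
    have hxm2 : ∃ z ∈ P, (LOTZ z).2 = (LOTZ x).2 - 1 :=
      ⟨zp, hzp, by rw [hzpf]; simp only [LOTZ, ep2]; omega⟩
    have hxp2 : ∃ z ∈ P, (LOTZ z).2 = (LOTZ x).2 + 1 :=
      ⟨zm, hzm, by rw [hzmf]; simp only [LOTZ, em2]; omega⟩
    have hsy := sum_eq_of_pareto y hyo
    have hyeq : y = opt n (leadingOnes y) := eq_opt_of_sum y hsy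
    have hyle := leadingOnes_le y
    set k := leadingOnes y with hk
    have hk0 : 0 < k := by
      rcases Nat.eq_zero_or_pos k with h | h
      · exact absurd (by rw [hyeq, h, opt_zero]) hy0
      · exact h
    have hkn : k < n := by
      rcases Nat.lt_or_ge k n with h | h
      · exact h
      · exact absurd (by rw [hyeq, (by omega : k = n), opt_n]) hy1
    have hcls := neighbour_class k hk0 hkn iy (by rw [← hyeq]; exact hwopt)
    rw [← hyeq] at hcls
    apply main_aux _ _ _ _ hxm hxp hxm2 hxp2
    rcases hcls with hv | hv
    · refine Or.inl ?_
      have H := lotz_missing_left P hP k hk0 hkn (hyeq ▸ hy)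
        (fun z hz hq => hwun z hz (hq.trans hv.symm))
      intro z hz hcc
      exact H z hz hcc
    · refine Or.inr (Or.inr (Or.inl ?_))
      have H := lotz_missing_right P hP k hk0 hkn (hyeq ▸ hy)
        (fun z hz hq => hwun z hz (hq.trans hv.symm))
      intro z hz hcc
      apply H z hz
      rw [hcc]
      simp only [LOTZ]
      omega

end EMO
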